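/- Let (β_k) be a nonnegative real sequence with β_k → 0 and ∑ β_k = ∞. Then for any real number a and any sequence (e_k) with e_k → 0, the sequence S_k = ∑_{i=0}^{k} (∏_{j=i+1}^{k} (1 − β_j)) β_i e_i + a ∏_{j=0}^{k} (1 − β_j) converges to 0 as k → ∞. -/

import Mathlib

open Filter Finset

lemma toeplitz_aux (β : ℕ → ℝ) (hβ0 : ∀ k, 0 ≤ β k)
    (hβlim : Tendsto β atTop (nhds 0))
    (hβsum : Tendsto (fun k => ∑ i ∈ Finset.range (k + 1), β i) atTop atTop)
    (x e : ℕ → ℝ) (he : Tendsto e atTop (nhds 0))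
    (hrec : ∀ k, x (k + 1) = (1 - β (k + 1)) * x k + β (k + 1) * e (k + 1)) :
    Tendsto x atTop (nhds 0) := by
  rw [NormedAddCommGroup.tendsto_nhds_zero]
  intro ε hε
  have hβ1 : ∀ᶠ k in atTop, β k ≤ 1 :=
    (hβlim.eventually_lt_const zero_lt_one).mono fun k hk => hk.le
  have heε : ∀ᶠ k in atTop, |e k| ≤ ε / 2 := by
    have := NormedAddCommGroup.tendsto_nhds_zero.mp he (ε / 2) (by positivity)
    exact this.mono fun k hk => le_of_lt hk
  obtain ⟨N, hN⟩ := (hβ1.and heε).exists_forall_of_atTop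
  -- key induction bound
  have key : ∀ k, N ≤ k → |x k| ≤ ε / 2 + (∏ j ∈ Finset.Ioc N k, (1 - β j)) * |x N| := by
    intro k hk
    induction k, hk using Nat.le_induction with
    | base => simp [abs_nonneg, hε.le]; positivity
    | succ k hk ih =>
      have hb1 : β (k + 1) ≤ 1 := (hN (k + 1) (by omega)).1
      have heb : |e (k + 1)| ≤ ε / 2 := (hN (k + 1) (by omega)).2
      have hP : 0 ≤ ∏ j ∈ Finset.Ioc N k, (1 - β j) := by
        apply Finset.prod_nonneg
        intro j hj
        have : N < j := (Finset.mem_Ioc.mp hj).1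
        linarith [(hN j (by omega)).1]
      rw [Finset.prod_Ioc_succ_top (by omega)]
      have h1 : |x (k + 1)| ≤ (1 - β (k + 1)) * |x k| + β (k + 1) * |e (k + 1)| := by
        rw [hrec]
        refine (abs_add_le _ _).trans ?_
        rw [abs_mul, abs_mul, abs_of_nonneg (by linarith : (0:ℝ) ≤ 1 - β (k+1)),
          abs_of_nonneg (hβ0 (k+1))]
      have hb0 := hβ0 (k + 1)
      nlinarith [abs_nonneg (x N), abs_nonneg (x k)]
  -- product tends to zero
  have hsum : Tendsto (fun k => ∑ j ∈ Finset.Ioc N k, β j) atTop atTop := by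
    have h1 : Tendsto (fun k => ∑ i ∈ Finset.range (k + 1), β i
        - ∑ i ∈ Finset.range (N + 1), β i) atTop atTop :=
      tendsto_atTop_add_const_right _ _ hβsum
    refine h1.congr' ?_
    filter_upwards [eventually_ge_atTop N] with k hk
    have : Finset.Ioc N k = Finset.Ico (N + 1) (k + 1) := by
      ext j; simp [Finset.mem_Ioc, Finset.mem_Ico]
    rw [this, Finset.sum_Ico_eq_sub _ (by omega)]
  have hexp : Tendsto (fun k => Real.exp (-∑ j ∈ Finset.Ioc N k, β j)) atTop (nhds 0) :=
    Real.tendsto_exp_atBot.comp (tendsto_neg_atTop_atBot.comp hsum)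
  have hprod : Tendsto (fun k => ∏ j ∈ Finset.Ioc N k, (1 - β j)) atTop (nhds 0) := by
    apply squeeze_zero' (g := fun k => Real.exp (-∑ j ∈ Finset.Ioc N k, β j))
    · filter_upwards [eventually_ge_atTop N] with k hk
      apply Finset.prod_nonneg
      intro j hj
      have : N < j := (Finset.mem_Ioc.mp hj).1
      linarith [(hN j (by omega)).1]
    · filter_upwards with k
      calc ∏ j ∈ Finset.Ioc N k, (1 - β j)
          ≤ ∏ j ∈ Finset.Ioc N k, Real.exp (-β j) := by
            apply Finset.prod_le_prod
            · intro j hj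
              have : N < j := (Finset.mem_Ioc.mp hj).1
              linarith [(hN j this.le).1]
            · intro j _
              linarith [Real.add_one_le_exp (-β j)]
        _ = Real.exp (∑ j ∈ Finset.Ioc N k, -β j) := (Real.exp_sum _ _).symm
        _ = Real.exp (-∑ j ∈ Finset.Ioc N k, β j) := by rw [Finset.sum_neg_distrib]
    · exact hexp
  have hfin : ∀ᶠ k in atTop, (∏ j ∈ Finset.Ioc N k, (1 - β j)) * |x N| < ε / 2 := by
    have : Tendsto (fun k => (∏ j ∈ Finset.Ioc N k, (1 - β j)) * |x N|) atTop (nhds 0) := by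
      simpa using hprod.mul_const |x N|
    exact this.eventually_lt_const (by positivity)
  filter_upwards [hfin, eventually_ge_atTop N] with k hk1 hk2
  calc ‖x k‖ = |x k| := rfl
    _ ≤ ε / 2 + (∏ j ∈ Finset.Ioc N k, (1 - β j)) * |x N| := key k hk2
    _ < ε / 2 + ε / 2 := by linarith
    _ = ε := by ring
theorem toeplitz_averaging (β : ℕ → ℝ) (hβ0 : ∀ k, 0 ≤ β k)
    (hβlim : Tendsto β atTop (nhds 0))
    (hβsum : Tendsto (fun k => ∑ i ∈ Finset.range (k + 1), β i) atTop atTop)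
    (a : ℝ) (e : ℕ → ℝ) (he : Tendsto e atTop (nhds 0)) :
    Tendsto (fun k =>
        (∑ i ∈ Finset.range (k + 1),
          (∏ j ∈ Finset.Ioc i k, (1 - β j)) * β i * e i)
        + a * ∏ j ∈ Finset.range (k + 1), (1 - β j))
      atTop (nhds 0) := by
  set x : ℕ → ℝ := fun k =>
    (∑ i ∈ Finset.range (k + 1),
      (∏ j ∈ Finset.Ioc i k, (1 - β j)) * β i * e i)
    + a * ∏ j ∈ Finset.range (k + 1), (1 - β j) with hx
  apply toeplitz_aux β hβ0 hβlim hβsum x e he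
  intro k
  rw [hx]
  simp only
  rw [Finset.sum_range_succ, Finset.prod_range_succ]
  have hsum : ∑ i ∈ Finset.range (k + 1),
      (∏ j ∈ Finset.Ioc i (k + 1), (1 - β j)) * β i * e i
    = ∑ i ∈ Finset.range (k + 1),
      (1 - β (k + 1)) * ((∏ j ∈ Finset.Ioc i k, (1 - β j)) * β i * e i) := by
    apply Finset.sum_congr rfl
    intro i hi
    have hik : i ≤ k := Nat.lt_succ_iff.mp (Finset.mem_range.mp hi)
    rw [Finset.prod_Ioc_succ_top hik]
    ring
  rw [hsum, Finset.Ioc_self, Finset.prod_empty, ← Finset.mul_sum]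
  ring
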